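/- Let n, m be positive integers and i, j integers with −m+1 ≤ i < j ≤ m. Then Σ_{−m+1 ≤ u < v ≤ n+m} ( C(n, u−i) C(n, v−j) − C(n, u−j) C(n, v−i) ) = Σ_{r=i−j+1}^{j−i} C(2n, n+r). -/

import Mathlib

/-- Binomial coefficient `C(p,q)` for integers, equal to `0` unless `0 ≤ q ≤ p`. -/
def ch (p q : ℤ) : ℤ := if 0 ≤ q ∧ q ≤ p then (p.toNat).choose q.toNat else 0

/-- Sum `Σ_{r=a}^{b} f r` with the signed convention: the usual sum if `a ≤ b`,
`0` if `b = a - 1`, and `-Σ_{r=b+1}^{a-1} f r` if `b < a - 1`. -/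
noncomputable def ssum (a b : ℤ) (f : ℤ → ℤ) : ℤ :=
  if a ≤ b then ∑ r ∈ Finset.Icc a b, f r else -∑ r ∈ Finset.Icc (b + 1) (a - 1), f r

lemma ch_zero_left {p q : ℤ} (h : q < 0) : ch p q = 0 := by
  unfold ch; rw [if_neg]; omega

lemma ch_zero_right {p q : ℤ} (h : p < q) : ch p q = 0 := by
  unfold ch; rw [if_neg]; omega

lemma ch_pascal (p : ℕ) (s : ℤ) : ch ((p:ℤ)+1) s = ch p s + ch p (s-1) := by
  unfold ch
  split_ifs with h1 h2 h3 h2 h3 <;> try omega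
  · -- 0 ≤ s ≤ p+1, 0 ≤ s ≤ p, 1 ≤ s
    have hs : s.toNat = (s-1).toNat + 1 := by omega
    have hp : ((p:ℤ)+1).toNat = p + 1 := by omega
    have hp2 : ((p:ℤ)).toNat = p := by omega
    rw [hs, hp, hp2, Nat.choose_succ_succ']
    push_cast; ring
  · -- s = 0
    have hs : s = 0 := by omega
    subst hs
    simp
  · -- s = p+1
    have hs : s = (p:ℤ)+1 := by omega
    subst hs
    have h1 : (((p:ℤ)+1).toNat) = p+1 := by omega
    have h2 : (((p:ℤ)+1-1).toNat) = p := by omega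
    have h3 : ((p:ℤ).toNat) = p := by omega
    rw [h1, h2, h3]
    simp

lemma ch_symm (p : ℕ) (s : ℤ) : ch p s = ch p ((p:ℤ) - s) := by
  unfold ch
  split_ifs with h1 h2 h2 <;> try omega
  have ha : ((p:ℤ)).toNat = p := by omega
  have hb : ((p:ℤ) - s).toNat = p - s.toNat := by omega
  rw [ha, hb, Nat.choose_symm (by omega)]

lemma ch_conv (p q : ℕ) (c : ℤ) :
    ∑ s ∈ Finset.Icc (0:ℤ) (p:ℤ), ch p s * ch q (c - s) = ch ((p:ℤ)+(q:ℤ)) c := by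
  induction p generalizing c with
  | zero =>
    simp only [Nat.cast_zero, zero_add, Finset.Icc_self, Finset.sum_singleton, sub_zero]
    have : ch 0 0 = 1 := by unfold ch; simp
    rw [this, one_mul]
  | succ p ih =>
    have hcast : ((p+1:ℕ):ℤ) = (p:ℤ)+1 := by push_cast; ring
    rw [hcast]
    have hsum : ∀ s : ℤ, ch ((p:ℤ)+1) s * ch q (c - s)
        = ch p s * ch q (c-s) + ch p (s-1) * ch q (c-s) := by
      intro s; rw [ch_pascal]; ring
    rw [Finset.sum_congr rfl fun s _ => hsum s, Finset.sum_add_distrib]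
    have h1 : ∑ s ∈ Finset.Icc (0:ℤ) ((p:ℤ)+1), ch p s * ch q (c-s)
        = ∑ s ∈ Finset.Icc (0:ℤ) (p:ℤ), ch p s * ch q (c-s) := by
      symm
      apply Finset.sum_subset (Finset.Icc_subset_Icc_right (by omega))
      intro x hx hx2
      simp only [Finset.mem_Icc] at hx hx2
      rw [ch_zero_right (by omega), zero_mul]
    have h2 : ∑ s ∈ Finset.Icc (0:ℤ) ((p:ℤ)+1), ch p (s-1) * ch q (c-s)
        = ∑ s ∈ Finset.Icc (0:ℤ) (p:ℤ), ch p s * ch q ((c-1)-s) := by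
      have hins : Finset.Icc (0:ℤ) ((p:ℤ)+1) = insert 0 (Finset.Icc (1:ℤ) ((p:ℤ)+1)) := by
        ext x; simp [Finset.mem_Icc]; omega
      rw [hins, Finset.sum_insert (by simp)]
      rw [ch_zero_left (by omega), zero_mul, zero_add]
      apply Finset.sum_equiv (Equiv.subRight (1:ℤ))
      · intro x; simp only [Finset.mem_Icc, Equiv.subRight_apply]; omega
      · intro x hx
        simp only [Equiv.subRight_apply]
        congr 1
        ring
    rw [h1, h2, ih, ih]
    have : ((p:ℤ)+1+(q:ℤ)) = ((p+q:ℕ):ℤ)+1 := by push_cast; ring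
    rw [this, ch_pascal (p+q)]
    push_cast
    ring_nf

lemma ch_vand (n : ℕ) (r : ℤ) :
    ∑ s ∈ Finset.Icc (0:ℤ) (n:ℤ), ch n s * ch n (s + r) = ch (2*(n:ℤ)) ((n:ℤ) + r) := by
  have h : ∀ s : ℤ, ch n (s + r) = ch n (((n:ℤ) - r) - s) := by
    intro s; rw [ch_symm n (s+r)]; ring_nf
  rw [Finset.sum_congr rfl fun s _ => by rw [h s], ch_conv n n ((n:ℤ) - r)]
  rw [show ((n:ℤ)+(n:ℤ)) = ((2*n:ℕ):ℤ) by push_cast; ring, ch_symm (2*n),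
    show ((2*n:ℕ):ℤ) - ((n:ℤ)-r) = (n:ℤ)+r by push_cast; ring,
    show ((2*n:ℕ):ℤ) = 2*(n:ℤ) by push_cast; ring]

/-- The Chu–Vandermonde computation in the proof of Proposition 3.2:
`Σ_{-m+1 ≤ u < v ≤ n+m} (C(n, u-i) C(n, v-j) - C(n, u-j) C(n, v-i))
= Σ_{r=i-j+1}^{j-i} C(2n, n+r)`. -/
theorem pfaffian_entry_evaluation (n m : ℕ) (hn : 0 < n) (hm : 0 < m)
    (i j : ℤ) (hi : -(m : ℤ) + 1 ≤ i) (hij : i < j) (hj : j ≤ (m : ℤ)) :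
    ∑ v ∈ Finset.Icc (-(m : ℤ) + 1) ((n : ℤ) + m),
      ∑ u ∈ Finset.Icc (-(m : ℤ) + 1) (v - 1),
        (ch (n : ℤ) (u - i) * ch (n : ℤ) (v - j) - ch (n : ℤ) (u - j) * ch (n : ℤ) (v - i))
    = ssum (i - j + 1) (j - i) (fun r => ch (2 * (n : ℤ)) ((n : ℤ) + r)) := by
  have hW : ∀ x : ℤ, ch (2*(n:ℤ)) ((n:ℤ)+x) = ch (2*(n:ℤ)) ((n:ℤ)-x) := by
    intro x
    have h := ch_symm (2*n) ((n:ℤ)+x)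
    push_cast at h
    rw [h]
    congr 1
    ring
  set A : Finset ℤ := Finset.Icc (-(m : ℤ) + 1) ((n : ℤ) + m) with hA
  set N : ℤ := (n:ℤ) + (j - i) with hN
  calc
    ∑ v ∈ A, ∑ u ∈ Finset.Icc (-(m : ℤ) + 1) (v - 1),
        (ch (n : ℤ) (u - i) * ch (n : ℤ) (v - j) - ch (n : ℤ) (u - j) * ch (n : ℤ) (v - i))
      = ∑ v ∈ A, ∑ u ∈ A, (if u < v then
          ch (n : ℤ) (u - i) * ch (n : ℤ) (v - j) - ch (n : ℤ) (u - j) * ch (n : ℤ) (v - i)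
          else 0) := by
        apply Finset.sum_congr rfl
        intro v hv
        simp only [hA, Finset.mem_Icc] at hv
        rw [← Finset.sum_filter]
        apply Finset.sum_congr _ (fun _ _ => rfl)
        ext u
        simp only [Finset.mem_Icc, Finset.mem_filter, hA]
        omega
    _ = (∑ v ∈ A, ∑ u ∈ A, (if u < v then ch (n : ℤ) (u - i) * ch (n : ℤ) (v - j) else 0))
        - (∑ v ∈ A, ∑ u ∈ A, (if u < v then ch (n : ℤ) (u - j) * ch (n : ℤ) (v - i) else 0)) := by
        rw [← Finset.sum_sub_distrib]
        apply Finset.sum_congr rfl; intro v _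
        rw [← Finset.sum_sub_distrib]
        apply Finset.sum_congr rfl; intro u _
        split <;> simp
    _ = (∑ v ∈ A, ∑ u ∈ A, (if u < v then ch (n : ℤ) (u - i) * ch (n : ℤ) (v - j) else 0))
        - (∑ v ∈ A, ∑ u ∈ A, (if v < u then ch (n : ℤ) (v - j) * ch (n : ℤ) (u - i) else 0)) := by
        congr 1
        exact Finset.sum_comm
    _ = ∑ v ∈ A, ∑ u ∈ A, ch (n : ℤ) (u - i) * ch (n : ℤ) (v - j) *
          ((if u < v then (1:ℤ) else 0) - (if v < u then (1:ℤ) else 0)) := by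
        rw [← Finset.sum_sub_distrib]
        apply Finset.sum_congr rfl; intro v _
        rw [← Finset.sum_sub_distrib]
        apply Finset.sum_congr rfl; intro u _
        split_ifs <;> ring
    _ = ∑ v ∈ Finset.Icc j (j + (n:ℤ)), ∑ u ∈ A, ch (n : ℤ) (u - i) * ch (n : ℤ) (v - j) *
          ((if u < v then (1:ℤ) else 0) - (if v < u then (1:ℤ) else 0)) := by
        symm
        apply Finset.sum_subset
        · intro x; simp only [hA, Finset.mem_Icc]; omega
        · intro v hv hv2
          simp only [hA, Finset.mem_Icc] at hv hv2
          apply Finset.sum_eq_zero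
          intro u _
          have : ch (n:ℤ) (v - j) = 0 := by
            rcases (by omega : v - j < 0 ∨ (n:ℤ) < v - j) with h | h
            · exact ch_zero_left h
            · exact ch_zero_right h
          rw [this]; ring
    _ = ∑ v ∈ Finset.Icc j (j + (n:ℤ)), ∑ u ∈ Finset.Icc i (i + (n:ℤ)),
          ch (n : ℤ) (u - i) * ch (n : ℤ) (v - j) *
          ((if u < v then (1:ℤ) else 0) - (if v < u then (1:ℤ) else 0)) := by
        apply Finset.sum_congr rfl; intro v _
        symm
        apply Finset.sum_subset
        · intro x; simp only [hA, Finset.mem_Icc]; omega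
        · intro u hu hu2
          simp only [hA, Finset.mem_Icc] at hu hu2
          have : ch (n:ℤ) (u - i) = 0 := by
            rcases (by omega : u - i < 0 ∨ (n:ℤ) < u - i) with h | h
            · exact ch_zero_left h
            · exact ch_zero_right h
          rw [this]; ring
    _ = ∑ t ∈ Finset.Icc (0:ℤ) (n:ℤ), ∑ s ∈ Finset.Icc (0:ℤ) (n:ℤ),
          ch (n : ℤ) s * ch (n : ℤ) t *
          ((if i + s < j + t then (1:ℤ) else 0) - (if j + t < i + s then (1:ℤ) else 0)) := by
        apply Finset.sum_equiv (Equiv.subRight j)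
        · intro v; simp only [Equiv.subRight_apply, Finset.mem_Icc]; omega
        · intro v hv
          apply Finset.sum_equiv (Equiv.subRight i)
          · intro u; simp only [Equiv.subRight_apply, Finset.mem_Icc]; omega
          · intro u hu
            simp only [Equiv.subRight_apply]
            have heq : ((if u < v then (1:ℤ) else 0) - (if v < u then (1:ℤ) else 0))
                = ((if i + (u - i) < j + (v - j) then (1:ℤ) else 0)
                  - (if j + (v - j) < i + (u - i) then (1:ℤ) else 0)) := by
              congr 1 <;> exact if_congr (by omega) rfl rfl
            rw [heq]
    _ = ∑ s ∈ Finset.Icc (0:ℤ) (n:ℤ), ∑ t ∈ Finset.Icc (0:ℤ) (n:ℤ),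
          ch (n : ℤ) s * ch (n : ℤ) t *
          ((if i + s < j + t then (1:ℤ) else 0) - (if j + t < i + s then (1:ℤ) else 0)) := by
        rw [Finset.sum_comm]
    _ = ∑ s ∈ Finset.Icc (0:ℤ) (n:ℤ), ∑ r ∈ Finset.Icc (-(n:ℤ)) (n:ℤ),
          ch (n : ℤ) s * ch (n : ℤ) (s + r) *
          ((if -(j-i) < r then (1:ℤ) else 0) - (if r < -(j-i) then (1:ℤ) else 0)) := by
        apply Finset.sum_congr rfl
        intro s hs
        simp only [Finset.mem_Icc] at hs
        rw [show ∑ t ∈ Finset.Icc (0:ℤ) (n:ℤ),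
              ch (n : ℤ) s * ch (n : ℤ) t *
              ((if i + s < j + t then (1:ℤ) else 0) - (if j + t < i + s then (1:ℤ) else 0))
            = ∑ t ∈ Finset.Icc (s-(n:ℤ)) (s+(n:ℤ)),
              ch (n : ℤ) s * ch (n : ℤ) t *
              ((if i + s < j + t then (1:ℤ) else 0) - (if j + t < i + s then (1:ℤ) else 0)) from by
          apply Finset.sum_subset
          · intro x; simp only [Finset.mem_Icc]; omega
          · intro t ht ht2
            simp only [Finset.mem_Icc] at ht ht2
            have : ch (n:ℤ) t = 0 := by
              rcases (by omega : t < 0 ∨ (n:ℤ) < t) with h | h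
              · exact ch_zero_left h
              · exact ch_zero_right h
            rw [this]; ring]
        apply Finset.sum_equiv (Equiv.subRight s)
        · intro t; simp only [Equiv.subRight_apply, Finset.mem_Icc]; omega
        · intro t ht
          simp only [Equiv.subRight_apply]
          rw [show s + (t - s) = t by ring]
          congr 2
          · exact if_congr (by omega) rfl rfl
          · exact if_congr (by omega) rfl rfl
    _ = ∑ r ∈ Finset.Icc (-(n:ℤ)) (n:ℤ), ch (2*(n:ℤ)) ((n:ℤ) + r) *
          ((if -(j-i) < r then (1:ℤ) else 0) - (if r < -(j-i) then (1:ℤ) else 0)) := by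
        rw [Finset.sum_comm]
        apply Finset.sum_congr rfl
        intro r _
        rw [← ch_vand n r, Finset.sum_mul]
    _ = ∑ r ∈ Finset.Icc (-N) N, ch (2*(n:ℤ)) ((n:ℤ) + r) *
          ((if -(j-i) < r then (1:ℤ) else 0) - (if r < -(j-i) then (1:ℤ) else 0)) := by
        apply Finset.sum_subset
        · intro x; simp only [hN, Finset.mem_Icc]; omega
        · intro r hr hr2
          simp only [hN, Finset.mem_Icc] at hr hr2
          have : ch (2*(n:ℤ)) ((n:ℤ) + r) = 0 := by
            rcases (by omega : (n:ℤ) + r < 0 ∨ 2*(n:ℤ) < (n:ℤ) + r) with h | h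
            · exact ch_zero_left h
            · exact ch_zero_right h
          rw [this]; ring
    _ = (∑ r ∈ Finset.Icc (i-j+1) N, ch (2*(n:ℤ)) ((n:ℤ) + r))
        - (∑ r ∈ Finset.Icc (-N) (i-j-1), ch (2*(n:ℤ)) ((n:ℤ) + r)) := by
        rw [show ∀ (S : Finset ℤ), (∑ r ∈ S, ch (2*(n:ℤ)) ((n:ℤ) + r) *
              ((if -(j-i) < r then (1:ℤ) else 0) - (if r < -(j-i) then (1:ℤ) else 0)))
            = (∑ r ∈ S, if -(j-i) < r then ch (2*(n:ℤ)) ((n:ℤ) + r) else 0)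
            - (∑ r ∈ S, if r < -(j-i) then ch (2*(n:ℤ)) ((n:ℤ) + r) else 0) from by
          intro S
          rw [← Finset.sum_sub_distrib]
          apply Finset.sum_congr rfl; intro r _
          split_ifs <;> ring]
        congr 1
        · rw [← Finset.sum_filter]
          apply Finset.sum_congr _ (fun _ _ => rfl)
          ext x
          simp only [Finset.mem_Icc, Finset.mem_filter, hN]
          omega
        · rw [← Finset.sum_filter]
          apply Finset.sum_congr _ (fun _ _ => rfl)
          ext x
          simp only [Finset.mem_Icc, Finset.mem_filter, hN]
          omega
    _ = (∑ r ∈ Finset.Icc (i-j+1) (j-i), ch (2*(n:ℤ)) ((n:ℤ) + r))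
        + (∑ r ∈ Finset.Icc (j-i+1) N, ch (2*(n:ℤ)) ((n:ℤ) + r))
        - (∑ r ∈ Finset.Icc (j-i+1) N, ch (2*(n:ℤ)) ((n:ℤ) + r)) := by
        congr 1
        · rw [show Finset.Icc (i-j+1) N
              = Finset.Icc (i-j+1) (j-i) ∪ Finset.Icc (j-i+1) N from by
            ext x; simp only [Finset.mem_Icc, Finset.mem_union, hN]; omega]
          apply Finset.sum_union
          rw [Finset.disjoint_left]
          intro x hx1 hx2
          simp only [Finset.mem_Icc] at hx1 hx2
          omega
        · apply Finset.sum_equiv (Equiv.neg ℤ)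
          · intro r; simp only [Equiv.neg_apply, Finset.mem_Icc, hN]; omega
          · intro r _
            simp only [hW r, sub_eq_add_neg, Equiv.neg_apply]
    _ = ssum (i - j + 1) (j - i) (fun r => ch (2 * (n : ℤ)) ((n : ℤ) + r)) := by
        rw [ssum, if_pos (by omega : i - j + 1 ≤ j - i)]
        ring
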